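/- Let Θ₁ > 0, α_∞ > 0, let λ be a nonzero finite positive Borel measure on ℝ supported in [0, Θ₁], let a ≥ 0 and let σ be a finite positive Borel measure supported in [0, Θ₁] such that for all real s > 0, α_∞ / ( s · ∫ dλ(Θ)/(1 + sΘ) ) = a/s + ∫ dσ(Θ)/(1 + sΘ). Then the total mass of σ satisfies μ₀(σ) = α_∞ · μ₁(λ) / μ₀(λ)²; equivalently, α_∞ = μ₀(σ) μ₀(λ)² / μ₁(λ) provided μ₁(λ) ≠ 0. -/

import Mathlib

open MeasureTheory Filter Topology


lemma aux_mem {μ : Measure ℝ} {t : Set ℝ} (h : μ tᶜ = 0) : ∀ᵐ x ∂μ, x ∈ t := by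
  rw [ae_iff]; exact h

lemma aux_integrable_inv {Θ₁ : ℝ} {μ : Measure ℝ} [IsFiniteMeasure μ]
    (hae : ∀ᵐ Θ ∂μ, Θ ∈ Set.Icc 0 Θ₁) {s : ℝ} (hs : 0 ≤ s) :
    Integrable (fun Θ : ℝ => (1 + s * Θ)⁻¹) μ := by
  refine Integrable.mono' (integrable_const 1)
    (((measurable_id.const_mul s).const_add 1).inv.aestronglyMeasurable) ?_
  filter_upwards [hae] with Θ hΘ
  have h1 : (1:ℝ) ≤ 1 + s * Θ := by nlinarith [hΘ.1]
  rw [Real.norm_eq_abs, abs_of_pos (by positivity)]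
  exact inv_le_one_of_one_le₀ h1

lemma aux_integrable_mul {Θ₁ : ℝ} {μ : Measure ℝ} [IsFiniteMeasure μ]
    (hae : ∀ᵐ Θ ∂μ, Θ ∈ Set.Icc 0 Θ₁) {s : ℝ} (hs : 0 ≤ s) :
    Integrable (fun Θ : ℝ => Θ * (1 + s * Θ)⁻¹) μ := by
  refine Integrable.mono' (integrable_const Θ₁)
    (measurable_id.mul ((measurable_id.const_mul s).const_add 1).inv).aestronglyMeasurable ?_
  filter_upwards [hae] with Θ hΘ
  have h1 : (1:ℝ) ≤ 1 + s * Θ := by nlinarith [hΘ.1]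
  have hinv : (0:ℝ) < (1 + s * Θ)⁻¹ := by positivity
  rw [Real.norm_eq_abs, abs_of_nonneg (mul_nonneg hΘ.1 hinv.le)]
  calc Θ * (1 + s * Θ)⁻¹ ≤ Θ * 1 :=
        mul_le_mul_of_nonneg_left (inv_le_one_of_one_le₀ h1) hΘ.1
    _ ≤ Θ₁ := by simpa using hΘ.2

lemma aux_tendsto_P {Θ₁ : ℝ} {μ : Measure ℝ} [IsFiniteMeasure μ]
    (hae : ∀ᵐ Θ ∂μ, Θ ∈ Set.Icc 0 Θ₁) :
    Tendsto (fun s : ℝ => ∫ Θ : ℝ, (1 + s * Θ)⁻¹ ∂μ) (𝓝[>] 0)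
      (𝓝 ((μ Set.univ).toReal)) := by
  have h := MeasureTheory.tendsto_integral_filter_of_dominated_convergence
    (μ := μ) (l := 𝓝[>] (0:ℝ)) (F := fun s Θ => (1 + s * Θ)⁻¹) (f := fun _ => (1:ℝ))
    (fun _ => (1:ℝ))
    (Eventually.of_forall fun s =>
      ((measurable_id.const_mul s).const_add 1).inv.aestronglyMeasurable)
    ?_ (integrable_const 1) ?_
  · simpa [Measure.real_def] using h
  · filter_upwards [self_mem_nhdsWithin] with s hs
    filter_upwards [hae] with Θ hΘ
    have h1 : (1:ℝ) ≤ 1 + s * Θ := by nlinarith [hΘ.1, le_of_lt (Set.mem_Ioi.mp hs)]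
    rw [Real.norm_eq_abs, abs_of_pos (by positivity)]
    exact inv_le_one_of_one_le₀ h1
  · filter_upwards with Θ
    have hc : ContinuousAt (fun s : ℝ => (1 + s * Θ)⁻¹) 0 :=
      ((continuousAt_const.add (continuousAt_id.mul continuousAt_const)).inv₀ (by norm_num))
    have := hc.tendsto.mono_left (nhdsWithin_le_nhds (s := Set.Ioi (0:ℝ)))
    simpa using this

lemma aux_tendsto_R {Θ₁ : ℝ} {μ : Measure ℝ} [IsFiniteMeasure μ]
    (hae : ∀ᵐ Θ ∂μ, Θ ∈ Set.Icc 0 Θ₁) :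
    Tendsto (fun s : ℝ => ∫ Θ : ℝ, Θ * (1 + s * Θ)⁻¹ ∂μ) (𝓝[>] 0)
      (𝓝 (∫ Θ : ℝ, Θ ∂μ)) := by
  refine MeasureTheory.tendsto_integral_filter_of_dominated_convergence
    (μ := μ) (l := 𝓝[>] (0:ℝ)) (F := fun s Θ => Θ * (1 + s * Θ)⁻¹) (f := fun Θ => Θ)
    (fun _ => Θ₁)
    (Eventually.of_forall fun s =>
      (measurable_id.mul ((measurable_id.const_mul s).const_add 1).inv).aestronglyMeasurable)
    ?_ (integrable_const Θ₁) ?_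
  · filter_upwards [self_mem_nhdsWithin] with s hs
    filter_upwards [hae] with Θ hΘ
    have h1 : (1:ℝ) ≤ 1 + s * Θ := by nlinarith [hΘ.1, le_of_lt (Set.mem_Ioi.mp hs)]
    have hinv : (0:ℝ) < (1 + s * Θ)⁻¹ := by positivity
    rw [Real.norm_eq_abs, abs_of_nonneg (mul_nonneg hΘ.1 hinv.le)]
    calc Θ * (1 + s * Θ)⁻¹ ≤ Θ * 1 :=
          mul_le_mul_of_nonneg_left (inv_le_one_of_one_le₀ h1) hΘ.1
      _ ≤ Θ₁ := by simpa using hΘ.2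
  · filter_upwards with Θ
    have hc : ContinuousAt (fun s : ℝ => Θ * (1 + s * Θ)⁻¹) 0 :=
      continuousAt_const.mul
        ((continuousAt_const.add (continuousAt_id.mul continuousAt_const)).inv₀ (by norm_num))
    have := hc.tendsto.mono_left (nhdsWithin_le_nhds (s := Set.Ioi (0:ℝ)))
    simpa using this

/-- The total mass of the tortuosity representing measure σ satisfies
μ₀(σ) = α_∞ μ₁(λ) / μ₀(λ)²; equivalently α_∞ = μ₀(σ) μ₀(λ)² / μ₁(λ)
when μ₁(λ) ≠ 0. -/
theorem stmt13 (Θ₁ αinf : ℝ) (hΘ₁ : 0 < Θ₁) (hα : 0 < αinf)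
    (lam : Measure ℝ) [IsFiniteMeasure lam] (hne : lam ≠ 0)
    (hsupp : lam (Set.Icc 0 Θ₁)ᶜ = 0)
    (a : ℝ) (ha : 0 ≤ a)
    (σ : Measure ℝ) [IsFiniteMeasure σ] (hσsupp : σ (Set.Icc 0 Θ₁)ᶜ = 0)
    (hrep : ∀ s : ℝ, 0 < s →
      αinf / (s * ∫ Θ : ℝ, (1 + s * Θ)⁻¹ ∂lam) =
        a / s + ∫ Θ : ℝ, (1 + s * Θ)⁻¹ ∂σ) :
    (σ Set.univ).toReal = αinf * (∫ Θ : ℝ, Θ ∂lam) / (lam Set.univ).toReal ^ 2 ∧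
    ((∫ Θ : ℝ, Θ ∂lam) ≠ 0 →
      αinf = (σ Set.univ).toReal * (lam Set.univ).toReal ^ 2 / (∫ Θ : ℝ, Θ ∂lam)) := by
  have hlam_ae : ∀ᵐ Θ ∂lam, Θ ∈ Set.Icc 0 Θ₁ := aux_mem hsupp
  have hσ_ae : ∀ᵐ Θ ∂σ, Θ ∈ Set.Icc 0 Θ₁ := aux_mem hσsupp
  set μ0 : ℝ := (lam Set.univ).toReal with hμ0def
  set ν0 : ℝ := (σ Set.univ).toReal with hν0def
  set μ1 : ℝ := ∫ Θ : ℝ, Θ ∂lam with hμ1def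
  set P : ℝ → ℝ := fun s => ∫ Θ : ℝ, (1 + s * Θ)⁻¹ ∂lam with hPdef
  set Q : ℝ → ℝ := fun s => ∫ Θ : ℝ, (1 + s * Θ)⁻¹ ∂σ with hQdef
  set R : ℝ → ℝ := fun s => ∫ Θ : ℝ, Θ * (1 + s * Θ)⁻¹ ∂lam with hRdef
  have hμ0pos : 0 < μ0 := by
    rw [hμ0def]
    exact ENNReal.toReal_pos (by simpa [Measure.measure_univ_eq_zero] using hne)
      (measure_ne_top lam _)
  -- positivity of P s
  have hPpos : ∀ s : ℝ, 0 < s → 0 < P s := by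
    intro s hs
    have hle : (1 + s * Θ₁)⁻¹ * μ0 ≤ P s := by
      have := integral_mono_ae (integrable_const ((1 + s * Θ₁)⁻¹))
        (aux_integrable_inv hlam_ae hs.le) ?_
      · simpa [mul_comm, Measure.real_def] using this
      · filter_upwards [hlam_ae] with Θ hΘ
        have h1 : (0:ℝ) < 1 + s * Θ := by nlinarith [hΘ.1]
        have h2 : 1 + s * Θ ≤ 1 + s * Θ₁ := by nlinarith [hΘ.2]
        exact inv_anti₀ h1 h2
    have : (0:ℝ) < (1 + s * Θ₁)⁻¹ * μ0 := by positivity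
    linarith
  -- identity μ0 - P s = s * R s
  have hkey : ∀ s : ℝ, 0 < s → μ0 - P s = s * R s := by
    intro s hs
    have e1 : ∫ Θ : ℝ, (1 - (1 + s * Θ)⁻¹) ∂lam = μ0 - P s := by
      rw [integral_sub (integrable_const 1) (aux_integrable_inv hlam_ae hs.le)]
      simp [hμ0def, smul_eq_mul, Measure.real_def, hPdef]
    have e2 : ∫ Θ : ℝ, (1 - (1 + s * Θ)⁻¹) ∂lam = s * R s := by
      rw [show s * R s = ∫ Θ : ℝ, s * (Θ * (1 + s * Θ)⁻¹) ∂lam from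
        (integral_const_mul s _).symm]
      apply integral_congr_ae
      filter_upwards [hlam_ae] with Θ hΘ
      have h1 : (0:ℝ) < 1 + s * Θ := by nlinarith [hΘ.1]
      field_simp
      ring
    linarith [e1, e2]
  -- rearranged representation: αinf / P s = a + s * Q s
  have h1 : ∀ s : ℝ, 0 < s → αinf / P s = a + s * Q s := by
    intro s hs
    have h := hrep s hs
    have hP := (hPpos s hs).ne'
    have hs' := hs.ne'
    calc αinf / P s = s * (αinf / (s * P s)) := by field_simp
      _ = s * (a / s + Q s) := by rw [h]
      _ = a + s * Q s := by field_simp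
  -- limits
  have hPlim : Tendsto P (𝓝[>] 0) (𝓝 μ0) := aux_tendsto_P hlam_ae
  have hQlim : Tendsto Q (𝓝[>] 0) (𝓝 ν0) := aux_tendsto_P hσ_ae
  have hRlim : Tendsto R (𝓝[>] 0) (𝓝 μ1) := aux_tendsto_R hlam_ae
  have hslim : Tendsto (fun s : ℝ => s) (𝓝[>] 0) (𝓝 0) :=
    tendsto_id.mono_left (nhdsWithin_le_nhds)
  -- a = αinf / μ0
  have ha2 : a = αinf / μ0 := by
    have hg : Tendsto (fun s => αinf / P s - a) (𝓝[>] (0:ℝ)) (𝓝 (αinf / μ0 - a)) :=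
      (tendsto_const_nhds.div hPlim hμ0pos.ne').sub tendsto_const_nhds
    have hg2 : Tendsto (fun s : ℝ => s * Q s) (𝓝[>] (0:ℝ)) (𝓝 0) := by
      have := hslim.mul hQlim
      simpa using this
    have heq : (fun s => αinf / P s - a) =ᶠ[𝓝[>] (0:ℝ)] fun s => s * Q s := by
      filter_upwards [self_mem_nhdsWithin] with s hs
      have := h1 s (Set.mem_Ioi.mp hs)
      linarith
    have := tendsto_nhds_unique (hg.congr' heq) hg2
    linarith
  -- pointwise formula for Q
  have hQform : ∀ s : ℝ, 0 < s → Q s = αinf * R s / (μ0 * P s) := by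
    intro s hs
    have hP := (hPpos s hs).ne'
    have hs' := hs.ne'
    have hμ := hμ0pos.ne'
    have e1 := h1 s hs
    rw [ha2] at e1
    have e2 := hkey s hs
    have key : s * Q s = s * (αinf * R s / (μ0 * P s)) := by
      calc s * Q s = αinf / P s - αinf / μ0 := by linarith [e1]
        _ = αinf * (μ0 - P s) / (μ0 * P s) := by field_simp
        _ = αinf * (s * R s) / (μ0 * P s) := by rw [← e2]
        _ = s * (αinf * R s / (μ0 * P s)) := by ring
    exact mul_left_cancel₀ hs' key
  -- final limit comparison
  have hform_lim : Tendsto (fun s => αinf * R s / (μ0 * P s)) (𝓝[>] (0:ℝ))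
      (𝓝 (αinf * μ1 / (μ0 * μ0))) :=
    (tendsto_const_nhds.mul hRlim).div (tendsto_const_nhds.mul hPlim)
      (by positivity)
  have heq2 : Q =ᶠ[𝓝[>] (0:ℝ)] fun s => αinf * R s / (μ0 * P s) := by
    filter_upwards [self_mem_nhdsWithin] with s hs
    exact hQform s (Set.mem_Ioi.mp hs)
  have hfinal : ν0 = αinf * μ1 / (μ0 * μ0) :=
    tendsto_nhds_unique (hQlim.congr' heq2) hform_lim
  constructor
  · rw [hfinal]; ring_nf
  · intro hμ1
    rw [hfinal]
    field_simp
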